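/- Let f be C² with L-Lipschitz Hessian, and suppose at x the step d satisfies ∇f(x) + (∇²f(x) + λI)d = r with λ ≤ β‖d‖/α, ‖r‖ ≤ ξ‖d‖², for constants β ≥ 1, α > 0, ξ > 0. Then ‖∇f(x+d)‖ ≤ (L/2 + β/α + ξ)‖d‖². -/

import Mathlib

open scoped RealInnerProductSpace

theorem stmt4 (n : ℕ) (f : EuclideanSpace ℝ (Fin n) → ℝ) (L : ℝ) (hL : 0 < L)
    (hf : ContDiff ℝ 2 f)
    (hLip : ∀ y z : EuclideanSpace ℝ (Fin n),
      ‖fderiv ℝ (gradient f) y - fderiv ℝ (gradient f) z‖ ≤ L * ‖y - z‖)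
    (x d r : EuclideanSpace ℝ (Fin n)) (lam β α ξ : ℝ)
    (hlam : 0 ≤ lam) (hβ : 1 ≤ β) (hα : 0 < α) (hξ : 0 < ξ)
    (heq : gradient f x + (fderiv ℝ (gradient f) x d + lam • d) = r)
    (hshift : lam ≤ β * ‖d‖ / α)
    (hres : ‖r‖ ≤ ξ * ‖d‖^2) :
    ‖gradient f (x + d)‖ ≤ (L/2 + β/α + ξ) * ‖d‖^2 := by
  set g := gradient f with hgdef
  have hg : ContDiff ℝ 1 g := by
    have h1 : ContDiff ℝ 1 (fderiv ℝ f) := hf.fderiv_right (by norm_num)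
    have : gradient f = fun y => (InnerProductSpace.toDual ℝ (EuclideanSpace ℝ (Fin n))).symm
        (fderiv ℝ f y) := rfl
    rw [hgdef, this]
    exact (InnerProductSpace.toDual ℝ (EuclideanSpace ℝ (Fin n))).symm.contDiff.comp h1
  have hgdiff : Differentiable ℝ g := hg.differentiable one_ne_zero
  have hgC : Continuous (fderiv ℝ g) := hg.continuous_fderiv one_ne_zero
  set A := fderiv ℝ g x with hA
  -- derivative of t ↦ g (x + t • d) - t • A d
  have hderiv : ∀ t : ℝ, HasDerivAt (fun t : ℝ => g (x + t • d) - t • A d)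
      (fderiv ℝ g (x + t • d) d - A d) t := by
    intro t
    have h1 : HasDerivAt (fun t : ℝ => x + t • d) d t := by
      simpa using ((hasDerivAt_id t).smul_const d).const_add x
    have h2 := ((hgdiff (x + t • d)).hasFDerivAt.comp_hasDerivAt t h1)
    have h3 : HasDerivAt (fun t : ℝ => t • A d) (A d) t := by
      simpa using (hasDerivAt_id t).smul_const (A d)
    exact h2.sub h3
  have hcont : Continuous fun t : ℝ => fderiv ℝ g (x + t • d) d - A d := by
    fun_prop
  have hint : (∫ t in (0:ℝ)..1, (fderiv ℝ g (x + t • d) d - A d))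
      = g (x + d) - A d - (g x - 0) := by
    have := intervalIntegral.integral_eq_sub_of_hasDerivAt
      (f := fun t : ℝ => g (x + t • d) - t • A d)
      (fun t _ => hderiv t) (hcont.intervalIntegrable 0 1)
    simpa using this
  have hbound : ‖g (x + d) - g x - A d‖ ≤ L / 2 * ‖d‖ ^ 2 := by
    have h1 : ‖∫ t in (0:ℝ)..1, (fderiv ℝ g (x + t • d) d - A d)‖
        ≤ |∫ t in (0:ℝ)..1, L * t * ‖d‖ ^ 2| := by
      apply intervalIntegral.norm_integral_le_abs_of_norm_le
      · filter_upwards [MeasureTheory.ae_restrict_mem measurableSet_Ioc] with t ht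
        rw [Set.uIoc_of_le (by norm_num : (0:ℝ) ≤ 1)] at ht
        have : fderiv ℝ g (x + t • d) d - A d
            = (fderiv ℝ g (x + t • d) - fderiv ℝ g x) d := by simp [hA]
        rw [this]
        calc ‖(fderiv ℝ g (x + t • d) - fderiv ℝ g x) d‖
            ≤ ‖fderiv ℝ g (x + t • d) - fderiv ℝ g x‖ * ‖d‖ :=
              (fderiv ℝ g (x + t • d) - fderiv ℝ g x).le_opNorm d
          _ ≤ (L * ‖x + t • d - x‖) * ‖d‖ := by
              gcongr; exact hLip _ _
          _ = L * t * ‖d‖ ^ 2 := by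
              simp [norm_smul, abs_of_pos ht.1]; ring
      · apply Continuous.intervalIntegrable; fun_prop
    have h2 : (∫ t in (0:ℝ)..1, L * t * ‖d‖ ^ 2) = L / 2 * ‖d‖ ^ 2 := by
      simp [intervalIntegral.integral_mul_const, mul_assoc,
        intervalIntegral.integral_const_mul, integral_id]
      ring
    rw [hint, h2, abs_of_nonneg (by positivity)] at h1
    calc ‖g (x + d) - g x - A d‖ = ‖g (x + d) - A d - (g x - 0)‖ := by congr 1; abel
      _ ≤ L / 2 * ‖d‖ ^ 2 := h1
  -- assemble
  have key : g (x + d) = (g (x + d) - g x - A d) + r - lam • d := by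
    rw [← heq]; abel
  rw [key]
  have hlamd : ‖lam • d‖ ≤ β / α * ‖d‖ ^ 2 := by
    rw [norm_smul, Real.norm_eq_abs, abs_of_nonneg hlam]
    calc lam * ‖d‖ ≤ (β * ‖d‖ / α) * ‖d‖ := by gcongr
      _ = β / α * ‖d‖ ^ 2 := by ring
  calc ‖(g (x + d) - g x - A d) + r - lam • d‖
      ≤ ‖g (x + d) - g x - A d‖ + ‖r‖ + ‖lam • d‖ := norm_sub_le_of_le (norm_add_le _ _) le_rfl
    _ ≤ L / 2 * ‖d‖ ^ 2 + ξ * ‖d‖ ^ 2 + β / α * ‖d‖ ^ 2 := by gcongr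
    _ = (L/2 + β/α + ξ) * ‖d‖^2 := by ring
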